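/- arXiv:2502.07097 — 5 statements merged into one kernel-verified Lean document; each statement's English description precedes it below -/
import Mathlib

section
/- Let 𝓗 be a complex inner product space, ξ ∈ 𝓗, and let σ, A, M be linear operators on 𝓗 such that A is symmetric (⟪Ax, y⟫ = ⟪x, Ay⟫ for all x, y), A·ξ = ξ, A·M = M·A, and σ·A = −A·σ. Then ⟪ξ, M·σ·ξ⟫ = 0. -/
/-- Generalization of Lemma 2: if `A` is symmetric, `A·ξ = ξ`, `A` commutes with `M`
and anticommutes with `σ`, then `⟪ξ, M·σ·ξ⟫ = 0`. -/
theorem measured_pauli_expectation_zero {𝓗 : Type*} [NormedAddCommGroup 𝓗]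
    [InnerProductSpace ℂ 𝓗] (ξ : 𝓗) (σ A M : 𝓗 →ₗ[ℂ] 𝓗)
    (hAsym : ∀ x y : 𝓗, inner ℂ (A x) y = (inner ℂ x (A y) : ℂ))
    (hAξ : A ξ = ξ) (hAM : A ∘ₗ M = M ∘ₗ A) (hanti : σ ∘ₗ A = -(A ∘ₗ σ)) :
    (inner ℂ ξ ((M ∘ₗ σ) ξ) : ℂ) = 0 := by
  have hσA : σ (A ξ) = -(A (σ ξ)) := by
    have := congrArg (fun f : 𝓗 →ₗ[ℂ] 𝓗 => f ξ) hanti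
    simpa using this
  have hAMv : ∀ v, A (M v) = M (A v) := fun v => by
    have := congrArg (fun f : 𝓗 →ₗ[ℂ] 𝓗 => f v) hAM
    simpa using this
  have key : (inner ℂ ξ ((M ∘ₗ σ) ξ) : ℂ) = -(inner ℂ ξ ((M ∘ₗ σ) ξ) : ℂ) := by
    calc (inner ℂ ξ ((M ∘ₗ σ) ξ) : ℂ)
        = inner ℂ (A ξ) (M (σ ξ)) := by rw [hAξ]; rfl
      _ = inner ℂ ξ (A (M (σ ξ))) := hAsym ξ (M (σ ξ))
      _ = inner ℂ ξ (M (A (σ ξ))) := by rw [hAMv]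
      _ = inner ℂ ξ (M (-(σ (A ξ)))) := by rw [hσA, neg_neg]
      _ = -(inner ℂ ξ ((M ∘ₗ σ) ξ) : ℂ) := by rw [hAξ, map_neg, inner_neg_right]; rfl
  linear_combination key / 2
end

section
/- Let 𝓗 be a complex inner product space, ξ ∈ 𝓗, and let σ, A, M be linear operators on 𝓗 such that M² = M, σ·M = M·σ, A·M = M·A, σ·A = −A·σ, A is symmetric (⟪Ax, y⟫ = ⟪x, Ay⟫ for all x, y), and A·ξ = ξ. Then ⟪ξ, M·σ·A·M·ξ⟫ = 0. -/
/-- Lemma 3 of the paper: if `M² = M`, `σ` commutes with `M`, `A` commutes with `M`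
and anticommutes with `σ`, `A` is symmetric and `A·ξ = ξ`, then
`⟪ξ, M·σ·A·M·ξ⟫ = 0`. -/
theorem sandwiched_pauli_vertex_expectation_zero {𝓗 : Type*} [NormedAddCommGroup 𝓗]
    [InnerProductSpace ℂ 𝓗] (ξ : 𝓗) (σ A M : 𝓗 →ₗ[ℂ] 𝓗)
    (hM2 : M ∘ₗ M = M) (hσM : σ ∘ₗ M = M ∘ₗ σ) (hAM : A ∘ₗ M = M ∘ₗ A)
    (hanti : σ ∘ₗ A = -(A ∘ₗ σ))
    (hAsym : ∀ x y : 𝓗, inner ℂ (A x) y = (inner ℂ x (A y) : ℂ))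
    (hAξ : A ξ = ξ) :
    (inner ℂ ξ ((M ∘ₗ σ ∘ₗ A ∘ₗ M) ξ) : ℂ) = 0 := by
  have hσM' : ∀ x, σ (M x) = M (σ x) := fun x => congrFun (congrArg DFunLike.coe hσM) x
  have hAM' : ∀ x, A (M x) = M (A x) := fun x => congrFun (congrArg DFunLike.coe hAM) x
  have hanti' : ∀ x, σ (A x) = -(A (σ x)) := fun x => congrFun (congrArg DFunLike.coe hanti) x
  have hanti2 : ∀ x, A (σ x) = -(σ (A x)) := fun x => by rw [hanti' x]; simp
  set T : 𝓗 →ₗ[ℂ] 𝓗 := M ∘ₗ σ ∘ₗ A ∘ₗ M with hT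
  have key : A (T ξ) = -(T ξ) := by
    simp only [hT, LinearMap.comp_apply]
    rw [hAM', hanti2, map_neg, hAM', hAM', hAξ, hAξ]
  have hx : (inner ℂ ξ (T ξ) : ℂ) = - inner ℂ ξ (T ξ) := by
    calc (inner ℂ ξ (T ξ) : ℂ) = inner ℂ (A ξ) (T ξ) := by rw [hAξ]
      _ = inner ℂ ξ (A (T ξ)) := hAsym _ _
      _ = inner ℂ ξ (-(T ξ)) := by rw [key]
      _ = - inner ℂ ξ (T ξ) := by simp
  linear_combination hx / 2
end

section
/- Let 𝓗 be a complex Hilbert space and ξ ∈ 𝓗 a unit vector. Let H₀, A₁, A₂, B₁, B₂, P, X, Y, Z be continuous linear operators on 𝓗 such that: A₁, A₂, B₁, B₂, P, X, Y, Z are all self-adjoint and square to the identity; A₁ξ = ξ, A₂ξ = ξ, B₁ξ = ξ, B₂ξ = ξ; X·Y = −Y·X = i·Z, Y·Z = −Z·Y = i·X, Z·X = −X·Z = i·Y; H₀ commutes with X, Y, Z; each Aᵢ commutes with X and anticommutes with Y and Z; each Bᵢ anticommutes with X and Y and commutes with Z; P commutes with X, Y, Z, A₁, A₂ and anticommutes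 with B₁, B₂. Set H = H₀ − A₁ − A₂ − B₁ − B₂, N = n_x·X + n_y·Y + n_z·Z for real n_x, n_y, n_z with n_x² + n_y² + n_z² = 1, and M_k = (1/2)·(1 + k·P) for k ∈ {−1, 1}. Then Σ_{k ∈ {−1,1}} i·k·⟪ξ, M_k·(H·N − N·H)·M_k·ξ⟫ = 0. -/
/-- First-order term of the energy difference vanishes: in the abstract toric code
QET model, `Σ_{k = ±1} i·k·⟪ξ, M_k·[H, N]·M_k·ξ⟫ = 0`. -/
theorem first_order_term_vanishes {𝓗 : Type*} [NormedAddCommGroup 𝓗]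
    [InnerProductSpace ℂ 𝓗] [CompleteSpace 𝓗] (ξ : 𝓗) (hξ : ‖ξ‖ = 1)
    (H₀ A₁ A₂ B₁ B₂ P X Y Z : 𝓗 →L[ℂ] 𝓗)
    (hA₁sa : IsSelfAdjoint A₁) (hA₂sa : IsSelfAdjoint A₂)
    (hB₁sa : IsSelfAdjoint B₁) (hB₂sa : IsSelfAdjoint B₂)
    (hPsa : IsSelfAdjoint P) (hXsa : IsSelfAdjoint X)
    (hYsa : IsSelfAdjoint Y) (hZsa : IsSelfAdjoint Z)
    (hA₁2 : A₁ * A₁ = 1) (hA₂2 : A₂ * A₂ = 1) (hB₁2 : B₁ * B₁ = 1) (hB₂2 : B₂ * B₂ = 1)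
    (hP2 : P * P = 1) (hX2 : X * X = 1) (hY2 : Y * Y = 1) (hZ2 : Z * Z = 1)
    (hA₁ξ : A₁ ξ = ξ) (hA₂ξ : A₂ ξ = ξ) (hB₁ξ : B₁ ξ = ξ) (hB₂ξ : B₂ ξ = ξ)
    (hXY : X * Y = Complex.I • Z) (hYX : Y * X = -(Complex.I • Z))
    (hYZ : Y * Z = Complex.I • X) (hZY : Z * Y = -(Complex.I • X))
    (hZX : Z * X = Complex.I • Y) (hXZ : X * Z = -(Complex.I • Y))
    (hH₀X : H₀ * X = X * H₀) (hH₀Y : H₀ * Y = Y * H₀) (hH₀Z : H₀ * Z = Z * H₀)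
    (hA₁X : A₁ * X = X * A₁) (hA₁Y : A₁ * Y = -(Y * A₁)) (hA₁Z : A₁ * Z = -(Z * A₁))
    (hA₂X : A₂ * X = X * A₂) (hA₂Y : A₂ * Y = -(Y * A₂)) (hA₂Z : A₂ * Z = -(Z * A₂))
    (hB₁X : B₁ * X = -(X * B₁)) (hB₁Y : B₁ * Y = -(Y * B₁)) (hB₁Z : B₁ * Z = Z * B₁)
    (hB₂X : B₂ * X = -(X * B₂)) (hB₂Y : B₂ * Y = -(Y * B₂)) (hB₂Z : B₂ * Z = Z * B₂)
    (hPX : P * X = X * P) (hPY : P * Y = Y * P) (hPZ : P * Z = Z * P)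
    (hPA₁ : P * A₁ = A₁ * P) (hPA₂ : P * A₂ = A₂ * P)
    (hPB₁ : P * B₁ = -(B₁ * P)) (hPB₂ : P * B₂ = -(B₂ * P))
    (n_x n_y n_z : ℝ) (hn : n_x ^ 2 + n_y ^ 2 + n_z ^ 2 = 1) :
    let H : 𝓗 →L[ℂ] 𝓗 := H₀ - A₁ - A₂ - B₁ - B₂
    let N : 𝓗 →L[ℂ] 𝓗 := (n_x : ℂ) • X + (n_y : ℂ) • Y + (n_z : ℂ) • Z
    let M : ℂ → (𝓗 →L[ℂ] 𝓗) := fun k => (1 / 2 : ℂ) • (1 + k • P)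
    ∑ k ∈ ({-1, 1} : Finset ℂ),
      Complex.I * k * (inner ℂ ξ ((M k * (H * N - N * H) * M k) ξ) : ℂ) = 0 := by
  intro H N M
  -- vanishing of expectation values of operators anticommuting with A₁
  have key : ∀ (W : 𝓗 →L[ℂ] 𝓗), A₁ * W * A₁ = -W → (inner ℂ ξ (W ξ) : ℂ) = 0 := by
    intro W hW
    have h1 : (inner ℂ ξ (W ξ) : ℂ) = inner ℂ (A₁ ξ) (W (A₁ ξ)) := by rw [hA₁ξ]
    have h2 : (inner ℂ (A₁ ξ) (W (A₁ ξ)) : ℂ) = inner ℂ ξ ((A₁ * W * A₁) ξ) := by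
      have hs := hA₁sa.isSymmetric (W (A₁ ξ)) ξ
      simp only [ContinuousLinearMap.coe_coe] at hs
      rw [← inner_conj_symm, ← hs, inner_conj_symm]
      simp [ContinuousLinearMap.mul_apply]
    rw [hW] at h2
    simp only [ContinuousLinearMap.neg_apply, inner_neg_right] at h2
    have h3 := h1.trans h2
    linear_combination h3 / 2
  have hYP0 : (inner ℂ ξ ((Y * P) ξ) : ℂ) = 0 := by
    refine key _ ?_
    have e1 : A₁ * (Y * P) * A₁ = (A₁ * Y) * (P * A₁) := by noncomm_ring
    rw [e1, hA₁Y, hPA₁]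
    have e2 : -(Y * A₁) * (A₁ * P) = -(Y * ((A₁ * A₁) * P)) := by noncomm_ring
    rw [e2, hA₁2, one_mul]
  have hZP0 : (inner ℂ ξ ((Z * P) ξ) : ℂ) = 0 := by
    refine key _ ?_
    have e1 : A₁ * (Z * P) * A₁ = (A₁ * Z) * (P * A₁) := by noncomm_ring
    rw [e1, hA₁Z, hPA₁]
    have e2 : -(Z * A₁) * (A₁ * P) = -(Z * ((A₁ * A₁) * P)) := by noncomm_ring
    rw [e2, hA₁2, one_mul]
  set C : 𝓗 →L[ℂ] 𝓗 := H * N - N * H with hCdef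
  set K : 𝓗 →L[ℂ] 𝓗 := A₁ + A₂ + B₁ + B₂ with hKdef
  set K' : 𝓗 →L[ℂ] 𝓗 := A₁ + A₂ - B₁ - B₂ with hK'def
  have hH₀N : H₀ * N = N * H₀ := by
    simp only [N, mul_add, add_mul, mul_smul_comm, smul_mul_assoc, hH₀X, hH₀Y, hH₀Z]
  have hPN : P * N = N * P := by
    simp only [N, mul_add, add_mul, mul_smul_comm, smul_mul_assoc, hPX, hPY, hPZ]
  have hPK : P * K = K' * P := by
    simp only [K, K', mul_add, add_mul, sub_mul, hPA₁, hPA₂, hPB₁, hPB₂]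
    abel
  have hC : C = N * K - K * N := by
    have : H = H₀ - K := by simp only [H, K]; abel
    rw [hCdef, this, sub_mul, mul_sub, hH₀N]
    abel
  -- the commutator [N, A+A'] part
  have hR : N * (K + K') - (K + K') * N
      = (4 : ℂ) • ((n_y : ℂ) • (Y * A₁) + (n_z : ℂ) • (Z * A₁)
        + (n_y : ℂ) • (Y * A₂) + (n_z : ℂ) • (Z * A₂)) := by
    have hKK' : K + K' = (2 : ℂ) • (A₁ + A₂) := by
      simp only [K, K', smul_add, two_smul]; abel
    rw [hKK']
    simp only [N, mul_add, add_mul, mul_smul_comm, smul_mul_assoc, smul_add, smul_smul,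
      hA₁X, hA₂X, hA₁Y, hA₂Y, hA₁Z, hA₂Z, smul_neg]
    module
  have hPC : P * C = (N * K' - K' * N) * P := by
    rw [hC]
    calc P * (N * K - K * N) = (P * N) * K - (P * K) * N := by noncomm_ring
      _ = (N * P) * K - (K' * P) * N := by rw [hPN, hPK]
      _ = N * (K' * P) - K' * (N * P) := by
            rw [mul_assoc N P K, mul_assoc K' P N, hPK, hPN]
      _ = (N * K' - K' * N) * P := by noncomm_ring
  have hPCCP : P * C + C * P = (N * (K + K') - (K + K') * N) * P := by
    rw [hPC, hC]
    noncomm_ring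
  -- expand the sum
  rw [Finset.sum_pair (by norm_num : (-1 : ℂ) ≠ 1)]
  have hM : M 1 * C * M 1 - M (-1) * C * M (-1) = (1 / 2 : ℂ) • (P * C + C * P) := by
    simp only [M, neg_smul, one_smul, smul_mul_assoc, mul_smul_comm, smul_smul,
      add_mul, mul_add, sub_mul, mul_sub, one_mul, mul_one, mul_assoc, neg_mul, mul_neg, neg_neg]
    module
  have hinner : (inner ℂ ξ ((M 1 * C * M 1) ξ) : ℂ) - inner ℂ ξ ((M (-1) * C * M (-1)) ξ)
      = inner ℂ ξ (((1 / 2 : ℂ) • (P * C + C * P)) ξ) := by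
    rw [← hM]
    simp [inner_sub_right]
  have hzero : (inner ℂ ξ (((1 / 2 : ℂ) • (P * C + C * P)) ξ) : ℂ) = 0 := by
    rw [hPCCP, hR]
    have happ : ((((4 : ℂ) • ((n_y : ℂ) • (Y * A₁) + (n_z : ℂ) • (Z * A₁)
        + (n_y : ℂ) • (Y * A₂) + (n_z : ℂ) • (Z * A₂))) * P) ξ)
        = (4 : ℂ) • ((n_y : ℂ) • ((Y * P) ξ) + (n_z : ℂ) • ((Z * P) ξ)
          + (n_y : ℂ) • ((Y * P) ξ) + (n_z : ℂ) • ((Z * P) ξ)) := by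
      have hYA₁ : (Y * A₁) * P = (Y * P) * A₁ := by
        have : (Y * A₁) * P = Y * (A₁ * P) := by noncomm_ring
        rw [this, ← hPA₁]; noncomm_ring
      have hZA₁ : (Z * A₁) * P = (Z * P) * A₁ := by
        have : (Z * A₁) * P = Z * (A₁ * P) := by noncomm_ring
        rw [this, ← hPA₁]; noncomm_ring
      have hYA₂ : (Y * A₂) * P = (Y * P) * A₂ := by
        have : (Y * A₂) * P = Y * (A₂ * P) := by noncomm_ring
        rw [this, ← hPA₂]; noncomm_ring
      have hZA₂ : (Z * A₂) * P = (Z * P) * A₂ := by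
        have : (Z * A₂) * P = Z * (A₂ * P) := by noncomm_ring
        rw [this, ← hPA₂]; noncomm_ring
      simp only [smul_mul_assoc, add_mul, hYA₁, hZA₁, hYA₂, hZA₂,
        ContinuousLinearMap.smul_apply, ContinuousLinearMap.add_apply,
        ContinuousLinearMap.mul_apply, hA₁ξ, hA₂ξ]
    rw [ContinuousLinearMap.smul_apply, happ]
    simp only [inner_smul_right, inner_add_right, hYP0, hZP0]
    ring
  have hfin := hinner.trans hzero
  have : (inner ℂ ξ ((M 1 * C * M 1) ξ) : ℂ) = inner ℂ ξ ((M (-1) * C * M (-1)) ξ) := by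
    linear_combination hfin
  rw [this]
  ring
end

section
/- Let 𝓗 be a complex Hilbert space and ξ ∈ 𝓗 a unit vector. Let H₀, A₁, A₂, B₁, B₂, P, X, Y, Z be continuous linear operators on 𝓗 such that: A₁, A₂, B₁, B₂, P, X, Y, Z are all self-adjoint and square to the identity; A₁ξ = ξ, A₂ξ = ξ, B₁ξ = ξ, B₂ξ = ξ; X·Y = −Y·X = i·Z, Y·Z = −Z·Y = i·X, Z·X = −X·Z = i·Y; H₀ commutes with X, Y, Z; each Aᵢ commutes with X and anticommutes with Y and Z; each Bᵢ anticommutes with X and Y and commutes with Z; P commutes with X, Y, Z, A₁, A₂ and anticommutes with B₁, B₂. Set H = H₀ − A₁ − A₂ − B₁ − B₂, N = n_x·X + n_y·Y + n_z·Z for real n_x, n_y, n_z with n_x² + n_y² + n_z² = 1, M_k = (1/2)·(1 + k·P) and U_k = (cos θ)·1 + i·k·(sin θ)·N for k ∈ {−1, 1} and θ ∈ ℝ. Then Σ_{k ∈ {−1,1}} ⟪ξ, M_k·U_k★·H·U_k·M_k·ξ⟫ − Σ_{k ∈ {−1,1}} ⟪ξ, M_k·H·M_k·ξ⟫ = (sin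 θ)²·Σ_{k ∈ {−1,1}} ⟪ξ, M_k·N·(H·N − N·H)·M_k·ξ⟫, where U_k★ denotes the adjoint of U_k. -/
set_option maxHeartbeats 4000000 in


/-- Equation (9) of the paper: in the abstract toric code QET model, the energy
difference `E_B − E_A` reduces to the second-order term
`sin²θ · Σ_k ⟪ξ, M_k·N·[H, N]·M_k·ξ⟫`. -/
theorem energy_difference_second_order {𝓗 : Type*} [NormedAddCommGroup 𝓗]
    [InnerProductSpace ℂ 𝓗] [CompleteSpace 𝓗] (ξ : 𝓗) (hξ : ‖ξ‖ = 1)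
    (H₀ A₁ A₂ B₁ B₂ P X Y Z : 𝓗 →L[ℂ] 𝓗)
    (hA₁sa : IsSelfAdjoint A₁) (hA₂sa : IsSelfAdjoint A₂)
    (hB₁sa : IsSelfAdjoint B₁) (hB₂sa : IsSelfAdjoint B₂)
    (hPsa : IsSelfAdjoint P) (hXsa : IsSelfAdjoint X)
    (hYsa : IsSelfAdjoint Y) (hZsa : IsSelfAdjoint Z)
    (hA₁2 : A₁ * A₁ = 1) (hA₂2 : A₂ * A₂ = 1) (hB₁2 : B₁ * B₁ = 1) (hB₂2 : B₂ * B₂ = 1)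
    (hP2 : P * P = 1) (hX2 : X * X = 1) (hY2 : Y * Y = 1) (hZ2 : Z * Z = 1)
    (hA₁ξ : A₁ ξ = ξ) (hA₂ξ : A₂ ξ = ξ) (hB₁ξ : B₁ ξ = ξ) (hB₂ξ : B₂ ξ = ξ)
    (hXY : X * Y = Complex.I • Z) (hYX : Y * X = -(Complex.I • Z))
    (hYZ : Y * Z = Complex.I • X) (hZY : Z * Y = -(Complex.I • X))
    (hZX : Z * X = Complex.I • Y) (hXZ : X * Z = -(Complex.I • Y))
    (hH₀X : H₀ * X = X * H₀) (hH₀Y : H₀ * Y = Y * H₀) (hH₀Z : H₀ * Z = Z * H₀)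
    (hA₁X : A₁ * X = X * A₁) (hA₁Y : A₁ * Y = -(Y * A₁)) (hA₁Z : A₁ * Z = -(Z * A₁))
    (hA₂X : A₂ * X = X * A₂) (hA₂Y : A₂ * Y = -(Y * A₂)) (hA₂Z : A₂ * Z = -(Z * A₂))
    (hB₁X : B₁ * X = -(X * B₁)) (hB₁Y : B₁ * Y = -(Y * B₁)) (hB₁Z : B₁ * Z = Z * B₁)
    (hB₂X : B₂ * X = -(X * B₂)) (hB₂Y : B₂ * Y = -(Y * B₂)) (hB₂Z : B₂ * Z = Z * B₂)
    (hPX : P * X = X * P) (hPY : P * Y = Y * P) (hPZ : P * Z = Z * P)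
    (hPA₁ : P * A₁ = A₁ * P) (hPA₂ : P * A₂ = A₂ * P)
    (hPB₁ : P * B₁ = -(B₁ * P)) (hPB₂ : P * B₂ = -(B₂ * P))
    (n_x n_y n_z : ℝ) (hn : n_x ^ 2 + n_y ^ 2 + n_z ^ 2 = 1) (θ : ℝ) :
    let H : 𝓗 →L[ℂ] 𝓗 := H₀ - A₁ - A₂ - B₁ - B₂
    let N : 𝓗 →L[ℂ] 𝓗 := (n_x : ℂ) • X + (n_y : ℂ) • Y + (n_z : ℂ) • Z
    let M : ℂ → (𝓗 →L[ℂ] 𝓗) := fun k => (1 / 2 : ℂ) • (1 + k • P)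
    let U : ℂ → (𝓗 →L[ℂ] 𝓗) := fun k =>
      (Real.cos θ : ℂ) • 1 + (Complex.I * k * Real.sin θ) • N
    (∑ k ∈ ({-1, 1} : Finset ℂ),
        (inner ℂ ξ ((M k * ContinuousLinearMap.adjoint (U k) * H * U k * M k) ξ) : ℂ)) -
      (∑ k ∈ ({-1, 1} : Finset ℂ), (inner ℂ ξ ((M k * H * M k) ξ) : ℂ)) =
    ((Real.sin θ : ℂ)) ^ 2 *
      ∑ k ∈ ({-1, 1} : Finset ℂ),
        (inner ℂ ξ ((M k * (N * (H * N - N * H)) * M k) ξ) : ℂ) := by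
  intro H N M U
  have hne : (-1 : ℂ) ≠ 1 := by norm_num
  have hHdef : H = H₀ - A₁ - A₂ - B₁ - B₂ := rfl
  have hNdef : N = (n_x : ℂ) • X + (n_y : ℂ) • Y + (n_z : ℂ) • Z := rfl
  have hU1def : U 1 = (Real.cos θ : ℂ) • 1 + (Complex.I * 1 * (Real.sin θ : ℂ)) • N := rfl
  have hU2def : U (-1) = (Real.cos θ : ℂ) • 1 + (Complex.I * (-1) * (Real.sin θ : ℂ)) • N := rfl
  have hM1 : M 1 = (1 / 2 : ℂ) • (1 + P) := by
    have : M 1 = (1 / 2 : ℂ) • (1 + (1 : ℂ) • P) := rfl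
    rw [this, one_smul]
  have hM2 : M (-1) = (1 / 2 : ℂ) • (1 - P) := by
    have : M (-1) = (1 / 2 : ℂ) • (1 + (-1 : ℂ) • P) := rfl
    rw [this, neg_smul, one_smul, ← sub_eq_add_neg]
  clear_value H N M U
  -- star of N
  have hNstar : star N = N := by
    rw [hNdef]
    simp [star_add, star_smul, hXsa.star_eq, hYsa.star_eq, hZsa.star_eq,
      Complex.star_def, Complex.conj_ofReal]
  -- N squares to 1
  have hN2 : N * N = 1 := by
    have hn' : (n_x : ℂ) * (n_x : ℂ) + (n_y : ℂ) * (n_y : ℂ) + (n_z : ℂ) * (n_z : ℂ) = 1 := by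
      exact_mod_cast (by nlinarith [hn] : n_x * n_x + n_y * n_y + n_z * n_z = 1)
    rw [hNdef]
    have expandN : ((n_x : ℂ) • X + (n_y : ℂ) • Y + (n_z : ℂ) • Z) *
        ((n_x : ℂ) • X + (n_y : ℂ) • Y + (n_z : ℂ) • Z)
        = ((n_x : ℂ) * (n_x : ℂ) + (n_y : ℂ) * (n_y : ℂ) + (n_z : ℂ) * (n_z : ℂ)) • 1 := by
      simp only [add_mul, mul_add, smul_mul_assoc, mul_smul_comm, smul_smul,
        hX2, hY2, hZ2, hXY, hYX, hYZ, hZY, hZX, hXZ, smul_neg]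
      module
    rw [expandN, hn', one_smul]
  -- the commutator [H, N]
  have hC : H * N - N * H =
      (2 * (n_y : ℂ)) • (Y * A₁) + (2 * (n_z : ℂ)) • (Z * A₁)
      + (2 * (n_y : ℂ)) • (Y * A₂) + (2 * (n_z : ℂ)) • (Z * A₂)
      + (2 * (n_x : ℂ)) • (X * B₁) + (2 * (n_y : ℂ)) • (Y * B₁)
      + (2 * (n_x : ℂ)) • (X * B₂) + (2 * (n_y : ℂ)) • (Y * B₂) := by
    rw [hHdef, hNdef]
    simp only [sub_mul, mul_sub, add_mul, mul_add, smul_mul_assoc, mul_smul_comm,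
      hH₀X, hH₀Y, hH₀Z, hA₁X, hA₁Y, hA₁Z, hA₂X, hA₂Y, hA₂Z,
      hB₁X, hB₁Y, hB₁Z, hB₂X, hB₂Y, hB₂Z, mul_neg, smul_neg]
    module
  -- word lemmas for moving P around
  have pYA₁ : P * (Y * A₁) = Y * P * A₁ := by rw [← mul_assoc, hPY]
  have pZA₁ : P * (Z * A₁) = Z * P * A₁ := by rw [← mul_assoc, hPZ]
  have pYA₂ : P * (Y * A₂) = Y * P * A₂ := by rw [← mul_assoc, hPY]
  have pZA₂ : P * (Z * A₂) = Z * P * A₂ := by rw [← mul_assoc, hPZ]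
  have yA₁p : Y * A₁ * P = Y * P * A₁ := by rw [mul_assoc, ← hPA₁, ← mul_assoc]
  have zA₁p : Z * A₁ * P = Z * P * A₁ := by rw [mul_assoc, ← hPA₁, ← mul_assoc]
  have yA₂p : Y * A₂ * P = Y * P * A₂ := by rw [mul_assoc, ← hPA₂, ← mul_assoc]
  have zA₂p : Z * A₂ * P = Z * P * A₂ := by rw [mul_assoc, ← hPA₂, ← mul_assoc]
  have pXB₁ : P * (X * B₁) = -(X * B₁ * P) := by
    rw [← mul_assoc, hPX, mul_assoc, hPB₁, mul_neg, ← mul_assoc]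
  have pYB₁ : P * (Y * B₁) = -(Y * B₁ * P) := by
    rw [← mul_assoc, hPY, mul_assoc, hPB₁, mul_neg, ← mul_assoc]
  have pXB₂ : P * (X * B₂) = -(X * B₂ * P) := by
    rw [← mul_assoc, hPX, mul_assoc, hPB₂, mul_neg, ← mul_assoc]
  have pYB₂ : P * (Y * B₂) = -(Y * B₂ * P) := by
    rw [← mul_assoc, hPY, mul_assoc, hPB₂, mul_neg, ← mul_assoc]
  -- anticommutator of P with the commutator
  have hPC : P * (H * N - N * H) + (H * N - N * H) * P =
      (4 * (n_y : ℂ)) • (Y * P * A₁) + (4 * (n_z : ℂ)) • (Z * P * A₁)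
      + (4 * (n_y : ℂ)) • (Y * P * A₂) + (4 * (n_z : ℂ)) • (Z * P * A₂) := by
    rw [hC]
    simp only [mul_add, add_mul, mul_smul_comm, smul_mul_assoc,
      pYA₁, pZA₁, pYA₂, pZA₂, yA₁p, zA₁p, yA₂p, zA₂p, pXB₁, pYB₁, pXB₂, pYB₂, smul_neg]
    module
  -- sandwiching with A₁ preserves expectation values
  have hadjA₁ : ContinuousLinearMap.adjoint A₁ = A₁ :=
    ContinuousLinearMap.isSelfAdjoint_iff'.mp hA₁sa
  have sand : ∀ T : 𝓗 →L[ℂ] 𝓗, (inner ℂ ξ ((A₁ * T * A₁) ξ) : ℂ) = inner ℂ ξ (T ξ) := by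
    intro T
    have h1 : (A₁ * T * A₁) ξ = A₁ (T ξ) := by
      simp only [ContinuousLinearMap.mul_apply, hA₁ξ]
    rw [h1, ← hadjA₁, ContinuousLinearMap.adjoint_inner_right, hA₁ξ]
  have hantiY : A₁ * (Y * P) * A₁ = -(Y * P) := by
    rw [← mul_assoc, hA₁Y, neg_mul, neg_mul, mul_assoc Y A₁ P, ← hPA₁,
      ← mul_assoc Y P A₁, mul_assoc (Y * P) A₁ A₁, hA₁2, mul_one]
  have hantiZ : A₁ * (Z * P) * A₁ = -(Z * P) := by
    rw [← mul_assoc, hA₁Z, neg_mul, neg_mul, mul_assoc Z A₁ P, ← hPA₁,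
      ← mul_assoc Z P A₁, mul_assoc (Z * P) A₁ A₁, hA₁2, mul_one]
  have hYP0 : (inner ℂ ξ ((Y * P) ξ) : ℂ) = 0 := by
    have h := sand (Y * P)
    rw [hantiY] at h
    simp only [ContinuousLinearMap.neg_apply, inner_neg_right] at h
    linear_combination (-(1 : ℂ) / 2) * h
  have hZP0 : (inner ℂ ξ ((Z * P) ξ) : ℂ) = 0 := by
    have h := sand (Z * P)
    rw [hantiZ] at h
    simp only [ContinuousLinearMap.neg_apply, inner_neg_right] at h
    linear_combination (-(1 : ℂ) / 2) * h
  -- expectation of the anticommutator vanishes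
  have hD0 : (inner ℂ ξ ((P * (H * N - N * H)) ξ) : ℂ)
      + (inner ℂ ξ (((H * N - N * H) * P) ξ) : ℂ) = 0 := by
    have h := congrArg (fun T : 𝓗 →L[ℂ] 𝓗 => (inner ℂ ξ (T ξ) : ℂ)) hPC
    simp only [ContinuousLinearMap.add_apply, ContinuousLinearMap.smul_apply,
      inner_add_right, inner_smul_right] at h
    rw [show ((Y * P * A₁ : 𝓗 →L[ℂ] 𝓗)) ξ = (Y * P) ξ from by
        rw [ContinuousLinearMap.mul_apply, hA₁ξ],
      show ((Z * P * A₁ : 𝓗 →L[ℂ] 𝓗)) ξ = (Z * P) ξ from by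
        rw [ContinuousLinearMap.mul_apply, hA₁ξ],
      show ((Y * P * A₂ : 𝓗 →L[ℂ] 𝓗)) ξ = (Y * P) ξ from by
        rw [ContinuousLinearMap.mul_apply, hA₂ξ],
      show ((Z * P * A₂ : 𝓗 →L[ℂ] 𝓗)) ξ = (Z * P) ξ from by
        rw [ContinuousLinearMap.mul_apply, hA₂ξ], hYP0, hZP0] at h
    simpa [inner_sub_right] using h
  -- trig identity
  have hcc : (Real.cos θ : ℂ) * (Real.cos θ : ℂ)
      = 1 - (Real.sin θ : ℂ) * (Real.sin θ : ℂ) := by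
    exact_mod_cast (by nlinarith [Real.sin_sq_add_cos_sq θ] :
      Real.cos θ * Real.cos θ = 1 - Real.sin θ * Real.sin θ)
  -- the core conjugation identity
  have core : ∀ a : ℂ, a * a = -((Real.sin θ : ℂ) * (Real.sin θ : ℂ)) →
      ((Real.cos θ : ℂ) • (1 : 𝓗 →L[ℂ] 𝓗) - a • N) * H * ((Real.cos θ : ℂ) • 1 + a • N)
      = H + (a * (Real.cos θ : ℂ)) • (H * N - N * H)
        + ((Real.sin θ : ℂ) * (Real.sin θ : ℂ)) • (N * (H * N - N * H)) := by
    intro a ha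
    have hNHN : N * H * N = N * (H * N - N * H) + H := by
      rw [mul_sub, ← mul_assoc, ← mul_assoc, hN2, one_mul]
      abel
    have e1 : ((Real.cos θ : ℂ) • (1 : 𝓗 →L[ℂ] 𝓗) - a • N) * H
        * ((Real.cos θ : ℂ) • 1 + a • N)
        = ((Real.cos θ : ℂ) * (Real.cos θ : ℂ)) • H + ((Real.cos θ : ℂ) * a) • (H * N)
          - (a * (Real.cos θ : ℂ)) • (N * H) - (a * a) • (N * H * N) := by
      simp only [sub_mul, add_mul, mul_add, mul_sub, smul_mul_assoc, mul_smul_comm,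
        smul_smul, one_mul, mul_one]
      module
    rw [e1, ha, hNHN, hcc]
    module
  -- auxiliary facts about a = I k sin θ
  have ha1 : (Complex.I * 1 * (Real.sin θ : ℂ)) * (Complex.I * 1 * (Real.sin θ : ℂ))
      = -((Real.sin θ : ℂ) * (Real.sin θ : ℂ)) := by
    linear_combination ((Real.sin θ : ℂ) * (Real.sin θ : ℂ)) * Complex.I_mul_I
  have ha2 : (Complex.I * (-1) * (Real.sin θ : ℂ)) * (Complex.I * (-1) * (Real.sin θ : ℂ))
      = -((Real.sin θ : ℂ) * (Real.sin θ : ℂ)) := by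
    linear_combination ((Real.sin θ : ℂ) * (Real.sin θ : ℂ)) * Complex.I_mul_I
  -- the adjoints of U
  have hstar_c : star ((Real.cos θ : ℂ)) = (Real.cos θ : ℂ) := by
    rw [Complex.star_def, Complex.conj_ofReal]
  have hstar_a1 : star (Complex.I * 1 * (Real.sin θ : ℂ))
      = -(Complex.I * 1 * (Real.sin θ : ℂ)) := by
    rw [Complex.star_def, map_mul, map_mul, Complex.conj_I, Complex.conj_ofReal, map_one]
    ring
  have hstar_a2 : star (Complex.I * (-1) * (Real.sin θ : ℂ))
      = -(Complex.I * (-1) * (Real.sin θ : ℂ)) := by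
    rw [Complex.star_def, map_mul, map_mul, Complex.conj_I, Complex.conj_ofReal, map_neg, map_one]
    ring
  have hadj1 : ContinuousLinearMap.adjoint (U 1)
      = (Real.cos θ : ℂ) • 1 - (Complex.I * 1 * (Real.sin θ : ℂ)) • N := by
    rw [← ContinuousLinearMap.star_eq_adjoint, hU1def, star_add, star_smul, star_smul,
      star_one, hNstar, hstar_c, hstar_a1, neg_smul, ← sub_eq_add_neg]
  have hadj2 : ContinuousLinearMap.adjoint (U (-1))
      = (Real.cos θ : ℂ) • 1 - (Complex.I * (-1) * (Real.sin θ : ℂ)) • N := by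
    rw [← ContinuousLinearMap.star_eq_adjoint, hU2def, star_add, star_smul, star_smul,
      star_one, hNstar, hstar_c, hstar_a2, neg_smul, ← sub_eq_add_neg]
  -- association and splitting helpers
  have assoc5 : ∀ a b c d e : 𝓗 →L[ℂ] 𝓗, a * b * c * d * e = a * (b * c * d) * e := by
    intros a b c d e
    simp only [mul_assoc]
  have split : ∀ (Mk T₁ T₂ T₃ : 𝓗 →L[ℂ] 𝓗) (b₁ b₂ : ℂ),
      Mk * (T₁ + b₁ • T₂ + b₂ • T₃) * Mk
        = Mk * T₁ * Mk + b₁ • (Mk * T₂ * Mk) + b₂ • (Mk * T₃ * Mk) := by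
    intros Mk T₁ T₂ T₃ b₁ b₂
    simp only [mul_add, add_mul, mul_smul_comm, smul_mul_assoc]
  -- the sandwiched identities
  have hW1 : M 1 * ContinuousLinearMap.adjoint (U 1) * H * U 1 * M 1
      = M 1 * H * M 1
        + (Complex.I * 1 * (Real.sin θ : ℂ) * (Real.cos θ : ℂ))
            • (M 1 * (H * N - N * H) * M 1)
        + ((Real.sin θ : ℂ) * (Real.sin θ : ℂ))
            • (M 1 * (N * (H * N - N * H)) * M 1) := by
    rw [assoc5, hadj1, hU1def, core _ ha1, split]
  have hW2 : M (-1) * ContinuousLinearMap.adjoint (U (-1)) * H * U (-1) * M (-1)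
      = M (-1) * H * M (-1)
        + (Complex.I * (-1) * (Real.sin θ : ℂ) * (Real.cos θ : ℂ))
            • (M (-1) * (H * N - N * H) * M (-1))
        + ((Real.sin θ : ℂ) * (Real.sin θ : ℂ))
            • (M (-1) * (N * (H * N - N * H)) * M (-1)) := by
    rw [assoc5, hadj2, hU2def, core _ ha2, split]
  have expand2 : ∀ C' : 𝓗 →L[ℂ] 𝓗,
      ((1 / 2 : ℂ) • (1 + P)) * C' * ((1 / 2 : ℂ) • (1 + P))
        - ((1 / 2 : ℂ) • (1 - P)) * C' * ((1 / 2 : ℂ) • (1 - P))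
      = (1 / 2 : ℂ) • (P * C' + C' * P) := by
    intro C'
    simp only [smul_mul_assoc, mul_smul_comm, smul_smul, add_mul, mul_add,
      sub_mul, mul_sub, mul_one, one_mul, smul_add, smul_sub]
    module
  have hq : (inner ℂ ξ ((M 1 * (H * N - N * H) * M 1) ξ) : ℂ)
      - (inner ℂ ξ ((M (-1) * (H * N - N * H) * M (-1)) ξ) : ℂ) = 0 := by
    have hop : M 1 * (H * N - N * H) * M 1 - M (-1) * (H * N - N * H) * M (-1)
        = (1 / 2 : ℂ) • (P * (H * N - N * H) + (H * N - N * H) * P) := by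
      rw [hM1, hM2]; exact expand2 _
    have h := congrArg (fun T : 𝓗 →L[ℂ] 𝓗 => (inner ℂ ξ (T ξ) : ℂ)) hop
    simp only [ContinuousLinearMap.sub_apply, ContinuousLinearMap.smul_apply,
      ContinuousLinearMap.add_apply, inner_sub_right, inner_smul_right,
      inner_add_right] at h
    linear_combination h + (1 / 2 : ℂ) * hD0
  -- finish
  simp only [Finset.sum_pair hne]
  rw [hW1, hW2]
  simp only [ContinuousLinearMap.add_apply, ContinuousLinearMap.smul_apply,
    inner_add_right, inner_smul_right]
  linear_combination (Complex.I * (Real.sin θ : ℂ) * (Real.cos θ : ℂ)) * hq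
end

section
/- Let 𝓗 be a complex Hilbert space and ξ ∈ 𝓗 a unit vector. Let H₀, A₁, A₂, B₁, B₂, P, X, Y, Z be continuous linear operators on 𝓗 such that: A₁, A₂, B₁, B₂, P, X, Y, Z are all self-adjoint and square to the identity; A₁ξ = ξ, A₂ξ = ξ, B₁ξ = ξ, B₂ξ = ξ; X·Y = −Y·X = i·Z, Y·Z = −Z·Y = i·X, Z·X = −X·Z = i·Y; H₀ commutes with X, Y, Z; each Aᵢ commutes with X and anticommutes with Y and Z; each Bᵢ anticommutes with X and Y and commutes with Z; P commutes with X, Y, Z, A₁, A₂ and anticommutes with B₁, B₂. Set H = H₀ − A₁ − A₂ − B₁ − B₂, N = n_x·X + n_y·Y + n_z·Z for real n_x, n_y, n_z with n_x² + n_y² + n_z² = 1, M_k = (1/2)·(1 + k·P) and U_k = (cos θ)·1 + i·k·(sin θ)·N for k ∈ {−1, 1} and θ ∈ ℝ. Then Σ_{k ∈ {−1,1}} ⟪ξ, M_k·U_k★·H·U_k·M_k·ξ⟫ − Σ_{k ∈ {−1,1}} ⟪ξ, M_k·H·M_k·ξ⟫ = 4·(sin θ)²·(n_y² + n_z²). In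 particular this quantity is nonnegative, so Bob cannot extract energy by any such local unitary: E_B ≥ E_A. -/
private lemma expect_drop {𝓗 : Type*} [NormedAddCommGroup 𝓗] [InnerProductSpace ℂ 𝓗]
    [CompleteSpace 𝓗] (ξ v : 𝓗) (G : 𝓗 →L[ℂ] 𝓗) (hG : IsSelfAdjoint G)
    (hGξ : G ξ = ξ) : (inner ℂ ξ (G v) : ℂ) = inner ℂ ξ v := by
  rw [← ContinuousLinearMap.adjoint_inner_left, hG.adjoint_eq, hGξ]

private lemma expect_zero {𝓗 : Type*} [NormedAddCommGroup 𝓗] [InnerProductSpace ℂ 𝓗]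
    [CompleteSpace 𝓗] (ξ : 𝓗) (G T : 𝓗 →L[ℂ] 𝓗) (hG : IsSelfAdjoint G)
    (hGξ : G ξ = ξ) (hGT : G * T = -(T * G)) : (inner ℂ ξ (T ξ) : ℂ) = 0 := by
  have h2 : G (T ξ) = -(T ξ) := by
    have h3 := congrArg (fun S : 𝓗 →L[ℂ] 𝓗 => S ξ) hGT
    simpa [ContinuousLinearMap.mul_apply, hGξ] using h3
  have h1 : (inner ℂ ξ (T ξ) : ℂ) = - inner ℂ ξ (T ξ) := by
    calc (inner ℂ ξ (T ξ) : ℂ) = inner ℂ ξ (G (T ξ)) := (expect_drop ξ (T ξ) G hG hGξ).symm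
      _ = inner ℂ ξ (-(T ξ)) := by rw [h2]
      _ = - inner ℂ ξ (T ξ) := inner_neg_right _ _
  linear_combination h1 / 2

set_option maxHeartbeats 4000000 in
/-- Main result of the paper: in the abstract toric code QET model, the energy
difference `E_B − E_A` equals `4·sin²θ·(n_y² + n_z²) ≥ 0`, so Bob cannot extract
energy by any such conditional local unitary: `E_B ≥ E_A`, i.e. no quantum energy
teleportation. -/
theorem no_energy_teleportation {𝓗 : Type*} [NormedAddCommGroup 𝓗]
    [InnerProductSpace ℂ 𝓗] [CompleteSpace 𝓗] (ξ : 𝓗) (hξ : ‖ξ‖ = 1)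
    (H₀ A₁ A₂ B₁ B₂ P X Y Z : 𝓗 →L[ℂ] 𝓗)
    (hA₁sa : IsSelfAdjoint A₁) (hA₂sa : IsSelfAdjoint A₂)
    (hB₁sa : IsSelfAdjoint B₁) (hB₂sa : IsSelfAdjoint B₂)
    (hPsa : IsSelfAdjoint P) (hXsa : IsSelfAdjoint X)
    (hYsa : IsSelfAdjoint Y) (hZsa : IsSelfAdjoint Z)
    (hA₁2 : A₁ * A₁ = 1) (hA₂2 : A₂ * A₂ = 1) (hB₁2 : B₁ * B₁ = 1) (hB₂2 : B₂ * B₂ = 1)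
    (hP2 : P * P = 1) (hX2 : X * X = 1) (hY2 : Y * Y = 1) (hZ2 : Z * Z = 1)
    (hA₁ξ : A₁ ξ = ξ) (hA₂ξ : A₂ ξ = ξ) (hB₁ξ : B₁ ξ = ξ) (hB₂ξ : B₂ ξ = ξ)
    (hXY : X * Y = Complex.I • Z) (hYX : Y * X = -(Complex.I • Z))
    (hYZ : Y * Z = Complex.I • X) (hZY : Z * Y = -(Complex.I • X))
    (hZX : Z * X = Complex.I • Y) (hXZ : X * Z = -(Complex.I • Y))
    (hH₀X : H₀ * X = X * H₀) (hH₀Y : H₀ * Y = Y * H₀) (hH₀Z : H₀ * Z = Z * H₀)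
    (hA₁X : A₁ * X = X * A₁) (hA₁Y : A₁ * Y = -(Y * A₁)) (hA₁Z : A₁ * Z = -(Z * A₁))
    (hA₂X : A₂ * X = X * A₂) (hA₂Y : A₂ * Y = -(Y * A₂)) (hA₂Z : A₂ * Z = -(Z * A₂))
    (hB₁X : B₁ * X = -(X * B₁)) (hB₁Y : B₁ * Y = -(Y * B₁)) (hB₁Z : B₁ * Z = Z * B₁)
    (hB₂X : B₂ * X = -(X * B₂)) (hB₂Y : B₂ * Y = -(Y * B₂)) (hB₂Z : B₂ * Z = Z * B₂)
    (hPX : P * X = X * P) (hPY : P * Y = Y * P) (hPZ : P * Z = Z * P)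
    (hPA₁ : P * A₁ = A₁ * P) (hPA₂ : P * A₂ = A₂ * P)
    (hPB₁ : P * B₁ = -(B₁ * P)) (hPB₂ : P * B₂ = -(B₂ * P))
    (n_x n_y n_z : ℝ) (hn : n_x ^ 2 + n_y ^ 2 + n_z ^ 2 = 1) (θ : ℝ) :
    let H : 𝓗 →L[ℂ] 𝓗 := H₀ - A₁ - A₂ - B₁ - B₂
    let N : 𝓗 →L[ℂ] 𝓗 := (n_x : ℂ) • X + (n_y : ℂ) • Y + (n_z : ℂ) • Z
    let M : ℂ → (𝓗 →L[ℂ] 𝓗) := fun k => (1 / 2 : ℂ) • (1 + k • P)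
    let U : ℂ → (𝓗 →L[ℂ] 𝓗) := fun k =>
      (Real.cos θ : ℂ) • 1 + (Complex.I * k * Real.sin θ) • N
    let E_B : ℂ := ∑ k ∈ ({-1, 1} : Finset ℂ),
      (inner ℂ ξ ((M k * ContinuousLinearMap.adjoint (U k) * H * U k * M k) ξ) : ℂ)
    let E_A : ℂ := ∑ k ∈ ({-1, 1} : Finset ℂ), (inner ℂ ξ ((M k * H * M k) ξ) : ℂ)
    E_B - E_A = 4 * ((Real.sin θ : ℂ)) ^ 2 * ((n_y : ℂ) ^ 2 + (n_z : ℂ) ^ 2) ∧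
      E_A.re ≤ E_B.re := by
  intro H N M U E_B E_A
  have hHdef : H = H₀ - A₁ - A₂ - B₁ - B₂ := rfl
  have hNdef : N = (n_x : ℂ) • X + (n_y : ℂ) • Y + (n_z : ℂ) • Z := rfl
  have hMdef : ∀ k : ℂ, M k = (1 / 2 : ℂ) • (1 + k • P) := fun _ => rfl
  have hUdef : ∀ k : ℂ, U k = (Real.cos θ : ℂ) • 1 + (Complex.I * k * Real.sin θ) • N :=
    fun _ => rfl
  have hEB : E_B = ∑ k ∈ ({-1, 1} : Finset ℂ),
      (inner ℂ ξ ((M k * ContinuousLinearMap.adjoint (U k) * H * U k * M k) ξ) : ℂ) := rfl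
  have hEA : E_A = ∑ k ∈ ({-1, 1} : Finset ℂ), (inner ℂ ξ ((M k * H * M k) ξ) : ℂ) := rfl
  -- scalar facts
  have hnC : (n_x : ℂ) ^ 2 + (n_y : ℂ) ^ 2 + (n_z : ℂ) ^ 2 = 1 := by
    norm_cast
  have hcs : (Real.cos θ : ℂ) ^ 2 + (Real.sin θ : ℂ) ^ 2 = 1 := by
    norm_cast
    exact Real.cos_sq_add_sin_sq θ
  -- expectation values
  have φ1 : (inner ℂ ξ ξ : ℂ) = 1 := by
    rw [inner_self_eq_norm_sq_to_K, hξ]; norm_num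
  have φY : (inner ℂ ξ (Y ξ) : ℂ) = 0 := expect_zero ξ A₁ Y hA₁sa hA₁ξ hA₁Y
  have φZ : (inner ℂ ξ (Z ξ) : ℂ) = 0 := expect_zero ξ A₁ Z hA₁sa hA₁ξ hA₁Z
  -- swap helpers
  have cswap : ∀ R S : 𝓗 →L[ℂ] 𝓗, R * S = S * R → ∀ T : 𝓗 →L[ℂ] 𝓗,
      R * (S * T) = S * (R * T) := by
    intro R S h T; rw [← mul_assoc, h, mul_assoc]
  have aswap : ∀ R S : 𝓗 →L[ℂ] 𝓗, R * S = -(S * R) → ∀ T : 𝓗 →L[ℂ] 𝓗,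
      R * (S * T) = -(S * (R * T)) := by
    intro R S h T; rw [← mul_assoc, h, neg_mul, mul_assoc]
  -- commutation of N with the other operators
  have hPN : P * N = N * P := by
    rw [hNdef]
    simp only [mul_add, add_mul, smul_mul_assoc, mul_smul_comm, hPX, hPY, hPZ]
  have hNH₀ : N * H₀ = H₀ * N := by
    rw [hNdef]
    simp only [mul_add, add_mul, smul_mul_assoc, mul_smul_comm, hH₀X, hH₀Y, hH₀Z]
  have hNN : N * N = 1 := by
    rw [hNdef]
    simp only [mul_add, add_mul, smul_mul_assoc, mul_smul_comm, smul_smul,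
      hX2, hY2, hZ2, hXY, hYX, hYZ, hZY, hZX, hXZ, smul_neg]
    match_scalars
    · linear_combination hnC
    · ring
    · ring
    · ring
  have hA₁N : A₁ * N = ((n_x : ℂ) • X - (n_y : ℂ) • Y - (n_z : ℂ) • Z) * A₁ := by
    rw [hNdef]
    simp only [mul_add, add_mul, sub_mul, smul_mul_assoc, mul_smul_comm,
      hA₁X, hA₁Y, hA₁Z, smul_neg]
    match_scalars <;> ring
  have hA₂N : A₂ * N = ((n_x : ℂ) • X - (n_y : ℂ) • Y - (n_z : ℂ) • Z) * A₂ := by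
    rw [hNdef]
    simp only [mul_add, add_mul, sub_mul, smul_mul_assoc, mul_smul_comm,
      hA₂X, hA₂Y, hA₂Z, smul_neg]
    match_scalars <;> ring
  have hNNp : N * (((n_x : ℂ) • X - (n_y : ℂ) • Y - (n_z : ℂ) • Z) : 𝓗 →L[ℂ] 𝓗)
      = ((n_x : ℂ) ^ 2 - (n_y : ℂ) ^ 2 - (n_z : ℂ) ^ 2) • (1 : 𝓗 →L[ℂ] 𝓗)
        + (-(2 * Complex.I * n_x * n_y)) • Z + (2 * Complex.I * n_x * n_z) • Y := by
    rw [hNdef]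
    simp only [mul_add, add_mul, mul_sub, sub_mul, smul_mul_assoc, mul_smul_comm, smul_smul,
      hX2, hY2, hZ2, hXY, hYX, hYZ, hZY, hZX, hXZ, smul_neg]
    match_scalars <;> ring
  -- normalization rules: move `P` to the left, `N` to the right past `H₀`
  have rNP : ∀ T : 𝓗 →L[ℂ] 𝓗, N * (P * T) = P * (N * T) := cswap N P hPN.symm
  have rA₁P : ∀ T : 𝓗 →L[ℂ] 𝓗, A₁ * (P * T) = P * (A₁ * T) := cswap A₁ P hPA₁.symm
  have rA₂P : ∀ T : 𝓗 →L[ℂ] 𝓗, A₂ * (P * T) = P * (A₂ * T) := cswap A₂ P hPA₂.symm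
  have hB₁P : B₁ * P = -(P * B₁) := by rw [hPB₁, neg_neg]
  have hB₂P : B₂ * P = -(P * B₂) := by rw [hPB₂, neg_neg]
  have rB₁P : ∀ T : 𝓗 →L[ℂ] 𝓗, B₁ * (P * T) = -(P * (B₁ * T)) := aswap B₁ P hB₁P
  have rB₂P : ∀ T : 𝓗 →L[ℂ] 𝓗, B₂ * (P * T) = -(P * (B₂ * T)) := aswap B₂ P hB₂P
  have rPP : ∀ T : 𝓗 →L[ℂ] 𝓗, P * (P * T) = T := by
    intro T; rw [← mul_assoc, hP2, one_mul]
  have rNH₀ : ∀ T : 𝓗 →L[ℂ] 𝓗, N * (H₀ * T) = H₀ * (N * T) := cswap N H₀ hNH₀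
  have rNN : ∀ T : 𝓗 →L[ℂ] 𝓗, N * (N * T) = T := by
    intro T; rw [← mul_assoc, hNN, one_mul]
  have hNP : N * P = P * N := hPN.symm
  have hA₁P : A₁ * P = P * A₁ := hPA₁.symm
  have hA₂P : A₂ * P = P * A₂ := hPA₂.symm
  -- adjoint of U k for real k
  have hadj1 : ContinuousLinearMap.adjoint (1 : 𝓗 →L[ℂ] 𝓗) = 1 := by
    rw [ContinuousLinearMap.one_def]; exact ContinuousLinearMap.adjoint_id
  have hNadj : ContinuousLinearMap.adjoint N = N := by
    rw [hNdef, map_add, map_add, ContinuousLinearMap.adjoint.map_smulₛₗ,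
      ContinuousLinearMap.adjoint.map_smulₛₗ, ContinuousLinearMap.adjoint.map_smulₛₗ,
      hXsa.adjoint_eq, hYsa.adjoint_eq, hZsa.adjoint_eq]
    simp [Complex.conj_ofReal]
  have hUadj : ∀ k : ℂ, (starRingEnd ℂ) k = k →
      ContinuousLinearMap.adjoint (U k)
        = (Real.cos θ : ℂ) • 1 - (Complex.I * k * Real.sin θ) • N := by
    intro k hk
    rw [hUdef, map_add, ContinuousLinearMap.adjoint.map_smulₛₗ,
      ContinuousLinearMap.adjoint.map_smulₛₗ, hadj1, hNadj]
    simp only [map_mul, Complex.conj_I, Complex.conj_ofReal, hk]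
    module
  have hcs2 : Complex.cos θ ^ 2 + Complex.sin θ ^ 2 = 1 := Complex.cos_sq_add_sin_sq θ
  -- the key operator identity
  have hT :
      ((M (-1) * ContinuousLinearMap.adjoint (U (-1)) * H * U (-1) * M (-1))
          + (M 1 * ContinuousLinearMap.adjoint (U 1) * H * U 1 * M 1))
        - ((M (-1) * H * M (-1)) + (M 1 * H * M 1))
      = ((Real.sin θ : ℂ) ^ 2) • (A₁ + A₂ - N * (A₁ * N) - N * (A₂ * N))
        - (Complex.I * Real.cos θ * Real.sin θ) •
            (P * (A₁ * N) + P * (A₂ * N) - P * (N * A₁) - P * (N * A₂)) := by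
    rw [hUadj 1 (by simp), hUadj (-1) (by simp), hMdef, hMdef, hUdef, hUdef, hHdef]
    simp only [mul_add, add_mul, mul_sub, sub_mul, mul_neg, neg_mul, mul_one, one_mul,
      smul_mul_assoc, mul_smul_comm, smul_add, smul_sub, smul_neg, smul_smul, mul_assoc,
      neg_neg, rNP, rA₁P, rA₂P, rB₁P, rB₂P, rPP, rNH₀, rNN,
      hNP, hA₁P, hA₂P, hB₁P, hB₂P, hP2, hNH₀, hNN]
    match_scalars <;> (first | ring1 | (ring_nf; (try simp only [Complex.I_sq]); all_goals (first | ring1 | linear_combination (1 / 2 : ℂ) * hcs2 | linear_combination (-1 / 2 : ℂ) * hcs2 | linear_combination hcs2 | linear_combination -hcs2 | linear_combination (3 / 2 : ℂ) * hcs2 | linear_combination (-3 / 2 : ℂ) * hcs2 | linear_combination (2 : ℂ) * hcs2 | linear_combination (-2 : ℂ) * hcs2 | linear_combination (5 / 2 : ℂ) * hcs2 | linear_combination (-5 / 2 : ℂ) * hcs2)))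
  -- expectation values of the pieces on the right-hand side
  have v1 : (inner ℂ ξ ((N * (A₁ * N)) ξ) : ℂ)
      = (n_x : ℂ) ^ 2 - (n_y : ℂ) ^ 2 - (n_z : ℂ) ^ 2 := by
    rw [hA₁N, ContinuousLinearMap.mul_apply, ContinuousLinearMap.mul_apply, hA₁ξ,
      ← ContinuousLinearMap.mul_apply, hNNp]
    simp only [ContinuousLinearMap.add_apply, ContinuousLinearMap.smul_apply,
      ContinuousLinearMap.one_apply, inner_add_right, inner_smul_right, φ1, φY, φZ]
    ring
  have v2 : (inner ℂ ξ ((N * (A₂ * N)) ξ) : ℂ)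
      = (n_x : ℂ) ^ 2 - (n_y : ℂ) ^ 2 - (n_z : ℂ) ^ 2 := by
    rw [hA₂N, ContinuousLinearMap.mul_apply, ContinuousLinearMap.mul_apply, hA₂ξ,
      ← ContinuousLinearMap.mul_apply, hNNp]
    simp only [ContinuousLinearMap.add_apply, ContinuousLinearMap.smul_apply,
      ContinuousLinearMap.one_apply, inner_add_right, inner_smul_right, φ1, φY, φZ]
    ring
  have w1 : (inner ℂ ξ ((P * (A₁ * N)) ξ) : ℂ) = inner ℂ ξ ((N * P) ξ) := by
    have e : P * (A₁ * N) = A₁ * (N * P) := by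
      rw [cswap P A₁ hPA₁ N, hPN]
    rw [e, ContinuousLinearMap.mul_apply]
    exact expect_drop ξ _ A₁ hA₁sa hA₁ξ
  have w2 : (inner ℂ ξ ((P * (A₂ * N)) ξ) : ℂ) = inner ℂ ξ ((N * P) ξ) := by
    have e : P * (A₂ * N) = A₂ * (N * P) := by
      rw [cswap P A₂ hPA₂ N, hPN]
    rw [e, ContinuousLinearMap.mul_apply]
    exact expect_drop ξ _ A₂ hA₂sa hA₂ξ
  have w3 : (inner ℂ ξ ((P * (N * A₁)) ξ) : ℂ) = inner ℂ ξ ((N * P) ξ) := by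
    have e : P * (N * A₁) = (N * P) * A₁ := by rw [cswap P N hPN A₁, mul_assoc]
    rw [e, ContinuousLinearMap.mul_apply, hA₁ξ]
  have w4 : (inner ℂ ξ ((P * (N * A₂)) ξ) : ℂ) = inner ℂ ξ ((N * P) ξ) := by
    have e : P * (N * A₂) = (N * P) * A₂ := by rw [cswap P N hPN A₂, mul_assoc]
    rw [e, ContinuousLinearMap.mul_apply, hA₂ξ]
  -- put everything together
  have hpair : ∀ f : ℂ → ℂ, ∑ k ∈ ({-1, 1} : Finset ℂ), f k = f (-1) + f 1 := by
    intro f; exact Finset.sum_pair (by norm_num)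
  have hmain : E_B - E_A
      = 4 * ((Real.sin θ : ℂ)) ^ 2 * ((n_y : ℂ) ^ 2 + (n_z : ℂ) ^ 2) := by
    have hsplit : E_B - E_A = inner ℂ ξ
        ((((M (-1) * ContinuousLinearMap.adjoint (U (-1)) * H * U (-1) * M (-1))
            + (M 1 * ContinuousLinearMap.adjoint (U 1) * H * U 1 * M 1))
          - ((M (-1) * H * M (-1)) + (M 1 * H * M 1))) ξ) := by
      rw [hEB, hEA, hpair, hpair]
      simp only [ContinuousLinearMap.sub_apply, ContinuousLinearMap.add_apply,
        inner_sub_right, inner_add_right]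
    rw [hsplit, hT]
    simp only [ContinuousLinearMap.sub_apply, ContinuousLinearMap.add_apply,
      ContinuousLinearMap.smul_apply, inner_sub_right, inner_add_right, inner_smul_right,
      v1, v2, w1, w2, w3, w4]
    rw [hA₁ξ, hA₂ξ, φ1]
    linear_combination (-2 * (Real.sin θ : ℂ) ^ 2) * hnC
  refine ⟨hmain, ?_⟩
  have hre : E_B.re - E_A.re = ((4 * Real.sin θ ^ 2 * (n_y ^ 2 + n_z ^ 2) : ℝ) : ℂ).re := by
    rw [← Complex.sub_re, hmain]
    norm_num
  have : (0 : ℝ) ≤ 4 * Real.sin θ ^ 2 * (n_y ^ 2 + n_z ^ 2) := by positivity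
  rw [Complex.ofReal_re] at hre
  linarith
end
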